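/- Let φ = Q₁x₁…Qₘxₘ. ψ be a prenex SL(k) formula where ψ is a quantifier-free boolean combination of domain-independent test formulae (atoms of the form x ≈ y, x ↪ (y₁,…,y_k), alloc(x), |h| ≥ n). If two SL-structures I and I' are (var(φ), m)-equivalent and I ⊨ φ, then I' ⊨ φ. -/

import Mathlib

def hDom {L : Type} {k : ℕ} (h : L → Option (Fin k → L)) : Set L := {l | h l ≠ none}
def hImg {L : Type} {k : ℕ} (h : L → Option (Fin k → L)) : Set L :=
  {l | ∃ l' v, h l' = some v ∧ ∃ i, v i = l}
def hElem {L : Type} {k : ℕ} (h : L → Option (Fin k → L)) : Set L := hDom h ∪ hImg h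

def SLEquiv {L : Type} {k : ℕ} (X : Set ℕ) (n : ℕ)
    (U U' : Set L) (s s' : ℕ → L) (h h' : L → Option (Fin k → L)) : Prop :=
  h = h' ∧
  (∀ x ∈ X, ∀ y ∈ X, (s x = s y ↔ s' x = s' y)) ∧
  (∀ x ∈ X, (s x ∈ hElem h ∨ s' x ∈ hElem h) → s x = s' x) ∧
  (n + X.ncard ≤ (U \ hElem h).ncard ∧ n + X.ncard ≤ (U' \ hElem h).ncard)

/-- Domain-independent test formulae for SL(k). -/
inductive TFk (k : ℕ) where
  | eq (x y : ℕ)                       -- x ≈ y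
  | pto (x : ℕ) (ys : Fin k → ℕ)       -- x ↪ (y₁,…,y_k)
  | alloc (x : ℕ)                      -- alloc(x)
  | hge (n : ℕ)                        -- |h| ≥ n

/-- Boolean combinations. -/
inductive BCk (k : ℕ) where
  | atom (a : TFk k)
  | top
  | neg (φ : BCk k)
  | conj (φ ψ : BCk k)

def tfkSat {L : Type} {k : ℕ} (s : ℕ → L) (h : L → Option (Fin k → L)) : TFk k → Prop
  | .eq x y => s x = s y
  | .pto x ys => h (s x) = some (fun i => s (ys i))
  | .alloc x => s x ∈ hDom h
  | .hge n => n ≤ (hDom h).ncard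

def bckSat {L : Type} {k : ℕ} (s : ℕ → L) (h : L → Option (Fin k → L)) : BCk k → Prop
  | .atom a => tfkSat s h a
  | .top => True
  | .neg φ => ¬ bckSat s h φ
  | .conj φ ψ => bckSat s h φ ∧ bckSat s h ψ

/-- Satisfaction of a prenex formula; the prefix is a list of (quantifier, variable)
pairs, `true` meaning ∀ and `false` meaning ∃; quantifiers range over the universe. -/
def prSat {L : Type} {k : ℕ} (U : Set L) (h : L → Option (Fin k → L)) :
    List (Bool × ℕ) → (ℕ → L) → BCk k → Prop
  | [], s, φ => bckSat s h φ
  | (b, x) :: Q, s, φ =>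
      if b then ∀ e ∈ U, prSat U h Q (Function.update s x e) φ
      else ∃ e ∈ U, prSat U h Q (Function.update s x e) φ

def tfkVars {k : ℕ} : TFk k → Set ℕ
  | .eq x y => {x, y}
  | .pto x ys => {x} ∪ Set.range ys
  | .alloc x => {x}
  | .hge _ => ∅

def bckVars {k : ℕ} : BCk k → Set ℕ
  | .atom a => tfkVars a
  | .top => ∅
  | .neg φ => bckVars φ
  | .conj φ ψ => bckVars φ ∪ bckVars ψ

/-- All variables of a prenex formula Q₁x₁…Qₘxₘ.ψ. -/
def prVars {k : ℕ} (Q : List (Bool × ℕ)) (φ : BCk k) : Set ℕ :=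
  {x | ∃ b, (b, x) ∈ Q} ∪ bckVars φ

section Aux

variable {L : Type} {k : ℕ}

lemma tfk_mono (s s' : ℕ → L) (h : L → Option (Fin k → L)) (a : TFk k)
    (heq : ∀ y ∈ tfkVars a, ∀ z ∈ tfkVars a, (s y = s z ↔ s' y = s' z))
    (hel : ∀ y ∈ tfkVars a, (s y ∈ hElem h ∨ s' y ∈ hElem h) → s y = s' y) :
    tfkSat s h a → tfkSat s' h a := by
  cases a with
  | eq x y =>
    intro hs
    exact (heq x (by simp [tfkVars]) y (by simp [tfkVars])).mp hs
  | pto x ys =>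
    intro hs
    have hs' : h (s x) = some (fun i => s (ys i)) := hs
    have hx : s x = s' x := by
      refine hel x (by simp [tfkVars]) (Or.inl (Or.inl ?_))
      simp [hDom, hs']
    have hy : ∀ i, s (ys i) = s' (ys i) := fun i =>
      hel (ys i) (by simp [tfkVars])
        (Or.inl (Or.inr ⟨s x, _, hs', i, rfl⟩))
    have hfe : (fun i => s (ys i)) = (fun i => s' (ys i)) := funext hy
    show h (s' x) = some (fun i => s' (ys i))
    rw [← hx, ← hfe]; exact hs'
  | alloc x =>
    intro hs
    have hs' : s x ∈ hDom h := hs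
    have hx : s x = s' x := hel x (by simp [tfkVars]) (Or.inl (Or.inl hs'))
    show s' x ∈ hDom h
    rw [← hx]; exact hs'
  | hge n => exact id

lemma bck_iff (s s' : ℕ → L) (h : L → Option (Fin k → L)) (φ : BCk k)
    (heq : ∀ y ∈ bckVars φ, ∀ z ∈ bckVars φ, (s y = s z ↔ s' y = s' z))
    (hel : ∀ y ∈ bckVars φ, (s y ∈ hElem h ∨ s' y ∈ hElem h) → s y = s' y) :
    bckSat s h φ ↔ bckSat s' h φ := by
  induction φ with
  | atom a =>
    constructor
    · exact tfk_mono s s' h a heq hel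
    · exact tfk_mono s' s h a (fun y hy z hz => (heq y hy z hz).symm)
        (fun y hy hm => (hel y hy (Or.symm hm)).symm)
  | top => simp [bckSat]
  | neg ψ ihψ =>
    simp only [bckSat]
    rw [ihψ heq hel]
  | conj ψ χ ihψ ihχ =>
    simp only [bckSat]
    rw [ihψ (fun y hy z hz => heq y (Or.inl hy) z (Or.inl hz))
        (fun y hy => hel y (Or.inl hy)),
      ihχ (fun y hy z hz => heq y (Or.inr hy) z (Or.inr hz))
        (fun y hy => hel y (Or.inr hy))]

lemma SLEquiv.symm' {X : Set ℕ} {n : ℕ} {U U' : Set L} {s s' : ℕ → L}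
    {h : L → Option (Fin k → L)}
    (he : SLEquiv X n U U' s s' h h) : SLEquiv X n U' U s' s h h := by
  obtain ⟨-, h2, h3, h4, h5⟩ := he
  exact ⟨rfl, fun x hx y hy => (h2 x hx y hy).symm,
    fun x hx hm => (h3 x hx (Or.symm hm)).symm, h5, h4⟩

lemma tfkVars_finite (a : TFk k) : (tfkVars a).Finite := by
  cases a with
  | eq x y => exact (Set.finite_singleton y).insert x
  | pto x ys => exact (Set.finite_singleton x).union (Set.finite_range ys)
  | alloc x => exact Set.finite_singleton x
  | hge n => exact Set.finite_empty

lemma bckVars_finite (φ : BCk k) : (bckVars φ).Finite := by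
  induction φ with
  | atom a => exact tfkVars_finite a
  | top => exact Set.finite_empty
  | neg ψ ih => exact ih
  | conj ψ χ ih1 ih2 => exact ih1.union ih2

lemma prVars_finite (Q : List (Bool × ℕ)) (φ : BCk k) : (prVars Q φ).Finite := by
  refine Set.Finite.union ?_ (bckVars_finite φ)
  refine Set.Finite.subset (Q.map Prod.snd).toFinset.finite_toSet ?_
  rintro x ⟨b, hb⟩
  simp only [List.coe_toFinset, List.mem_map, Set.mem_setOf_eq]
  exact ⟨(b, x), hb, rfl⟩

/-- The key back-and-forth extension lemma. -/
lemma extend (X X' : Set ℕ) (n : ℕ) (U U' : Set L) (s s' : ℕ → L)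
    (h : L → Option (Fin k → L))
    (hXfin : X.Finite) (hsub : X' ⊆ X)
    (hwf : hElem h ⊆ U ∩ U')
    (hs'U : ∀ y, s' y ∈ U')
    (heq : SLEquiv X (n + 1) U U' s s' h h) (x : ℕ) (e : L) (_he : e ∈ U) :
    ∃ e' ∈ U', SLEquiv X' n U U' (Function.update s x e) (Function.update s' x e') h h := by
  obtain ⟨-, h2, h3, hc1, hc2⟩ := heq
  have hX'fin : X'.Finite := hXfin.subset hsub
  have hcard : X'.ncard ≤ X.ncard := Set.ncard_le_ncard hsub hXfin
  have hcard1 : n + X'.ncard ≤ (U \ hElem h).ncard := by omega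
  have hcard2 : n + X'.ncard ≤ (U' \ hElem h).ncard := by omega
  by_cases hcase1 : e ∈ hElem h
  · refine ⟨e, (hwf hcase1).2, rfl, ?_, ?_, hcard1, hcard2⟩
    · intro y hy z hz
      rcases eq_or_ne y x with hyx | hyx
      · rcases eq_or_ne z x with hzx | hzx
        · rw [hyx, hzx]; simp
        · rw [hyx]
          simp only [Function.update_self, Function.update_of_ne hzx]
          constructor
          · intro hez
            have hz' : s z ∈ hElem h := hez ▸ hcase1
            rw [← h3 z (hsub hz) (Or.inl hz')]; exact hez
          · intro hez
            have hz' : s' z ∈ hElem h := hez ▸ hcase1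
            rw [h3 z (hsub hz) (Or.inr hz')]; exact hez
      · rcases eq_or_ne z x with hzx | hzx
        · rw [hzx]
          simp only [Function.update_self, Function.update_of_ne hyx]
          constructor
          · intro hey
            have hy' : s y ∈ hElem h := hey ▸ hcase1
            rw [← h3 y (hsub hy) (Or.inl hy')]; exact hey
          · intro hey
            have hy' : s' y ∈ hElem h := hey ▸ hcase1
            rw [h3 y (hsub hy) (Or.inr hy')]; exact hey
        · simpa [Function.update_of_ne hyx, Function.update_of_ne hzx] using
            h2 y (hsub hy) z (hsub hz)
    · intro y hy hm
      rcases eq_or_ne y x with hyx | hyx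
      · rw [hyx]; simp
      · simp only [Function.update_of_ne hyx] at hm ⊢
        exact h3 y (hsub hy) hm
  · by_cases hcase2 : ∃ y ∈ X', y ≠ x ∧ s y = e
    · obtain ⟨y, hy, hyx, hse⟩ := hcase2
      refine ⟨s' y, hs'U y, rfl, ?_, ?_, hcard1, hcard2⟩
      · intro z hz w hw
        rcases eq_or_ne z x with hzx | hzx
        · rcases eq_or_ne w x with hwx | hwx
          · rw [hzx, hwx]; simp
          · rw [hzx]
            simp only [Function.update_self, Function.update_of_ne hwx, ← hse]
            exact h2 y (hsub hy) w (hsub hw)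
        · rcases eq_or_ne w x with hwx | hwx
          · rw [hwx]
            simp only [Function.update_self, Function.update_of_ne hzx, ← hse]
            exact h2 z (hsub hz) y (hsub hy)
          · simpa [Function.update_of_ne hzx, Function.update_of_ne hwx] using
              h2 z (hsub hz) w (hsub hw)
      · intro z hz hm
        rcases eq_or_ne z x with hzx | hzx
        · rw [hzx] at hm ⊢
          simp only [Function.update_self, ← hse] at hm ⊢
          exact h3 y (hsub hy) hm
        · simp only [Function.update_of_ne hzx] at hm ⊢
          exact h3 z (hsub hz) hm
    · -- fresh case
      have hUfin : (U' \ hElem h).Finite := by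
        by_contra hinf
        rw [Set.Infinite.ncard hinf] at hc2
        omega
      have hSfin : (s' '' (X' \ {x})).Finite := (hX'fin.diff.image s')
      have hSlt : (s' '' (X' \ {x})).ncard < (U' \ hElem h).ncard := by
        have h1 : (s' '' (X' \ {x})).ncard ≤ (X' \ {x}).ncard :=
          Set.ncard_image_le hX'fin.diff
        have h2' : (X' \ {x}).ncard ≤ X'.ncard :=
          Set.ncard_le_ncard Set.diff_subset hX'fin
        omega
      obtain ⟨e', he'U, he'S⟩ := Set.exists_mem_notMem_of_ncard_lt_ncard hSlt hSfin
      have he'U' : e' ∈ U' := he'U.1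
      have he'el : e' ∉ hElem h := he'U.2
      have he'fresh : ∀ z ∈ X', z ≠ x → s' z ≠ e' := by
        intro z hz hzx hze
        exact he'S ⟨z, ⟨hz, hzx⟩, hze⟩
      refine ⟨e', he'U', rfl, ?_, ?_, hcard1, hcard2⟩
      · intro z hz w hw
        rcases eq_or_ne z x with hzx | hzx
        · rcases eq_or_ne w x with hwx | hwx
          · rw [hzx, hwx]; simp
          · rw [hzx]
            simp only [Function.update_self, Function.update_of_ne hwx]
            constructor
            · intro hew; exact absurd ⟨w, hw, hwx, hew.symm⟩ hcase2
            · intro hew; exact absurd hew.symm (he'fresh w hw hwx)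
        · rcases eq_or_ne w x with hwx | hwx
          · rw [hwx]
            simp only [Function.update_self, Function.update_of_ne hzx]
            constructor
            · intro hze; exact absurd ⟨z, hz, hzx, hze⟩ hcase2
            · intro hze; exact absurd hze (he'fresh z hz hzx)
          · simpa [Function.update_of_ne hzx, Function.update_of_ne hwx] using
              h2 z (hsub hz) w (hsub hw)
      · intro z hz hm
        rcases eq_or_ne z x with hzx | hzx
        · rw [hzx] at hm
          simp only [Function.update_self] at hm
          exact absurd hm (by push_neg; exact ⟨hcase1, he'el⟩)
        · simp only [Function.update_of_ne hzx] at hm ⊢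
          exact h3 z (hsub hz) hm

end Aux

/-- (var(φ), m)-equivalent structures satisfy the same prenex formulae
whose matrix is a boolean combination of domain-independent test formulae. -/
theorem prenex_equiv {L : Type} {k : ℕ}
    (Q : List (Bool × ℕ)) (φ : BCk k)
    (U U' : Set L) (s s' : ℕ → L) (h h' : L → Option (Fin k → L))
    (hfin : (hDom h).Finite)
    (hwf : hElem h ⊆ U ∩ U')
    (hsU : ∀ y, s y ∈ U) (hs'U : ∀ y, s' y ∈ U')
    (heq : SLEquiv (prVars Q φ) Q.length U U' s s' h h')
    (hsat : prSat U h Q s φ) :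
    prSat U' h' Q s' φ := by
  obtain ⟨hh, -⟩ := id heq
  subst hh
  induction Q generalizing s s' with
  | nil =>
    obtain ⟨-, h2, h3, -⟩ := heq
    have hsubv : bckVars φ ⊆ prVars ([] : List (Bool × ℕ)) φ := Set.subset_union_right
    exact (bck_iff s s' h φ
      (fun y hy z hz => h2 y (hsubv hy) z (hsubv hz))
      (fun y hy => h3 y (hsubv hy))).mp hsat
  | cons q Q ih =>
    obtain ⟨b, x⟩ := q
    have hXfin : (prVars ((b, x) :: Q) φ).Finite := prVars_finite _ _
    have hsub : prVars Q φ ⊆ prVars ((b, x) :: Q) φ := by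
      apply Set.union_subset_union_left
      rintro y ⟨b', hb'⟩
      exact ⟨b', List.mem_cons_of_mem _ hb'⟩
    cases b with
    | true =>
      simp only [prSat, if_true] at hsat ⊢
      intro e' he'
      obtain ⟨e, heU, heq'⟩ := extend (prVars ((true, x) :: Q) φ) (prVars Q φ)
        Q.length U' U s' s h hXfin hsub
        (fun l hl => ⟨(hwf hl).2, (hwf hl).1⟩) hsU heq.symm' x e' he'
      refine ih _ _ (fun y => ?_) (fun y => ?_) (hsat e heU) heq'.symm'
      · rcases eq_or_ne y x with hyx | hyx
        · rw [hyx, Function.update_self]; exact heU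
        · rw [Function.update_of_ne hyx]; exact hsU y
      · rcases eq_or_ne y x with hyx | hyx
        · rw [hyx, Function.update_self]; exact he'
        · rw [Function.update_of_ne hyx]; exact hs'U y
    | false =>
      simp only [prSat, if_false] at hsat ⊢
      obtain ⟨e, heU, hsat'⟩ := hsat
      obtain ⟨e', he'U, heq'⟩ := extend (prVars ((false, x) :: Q) φ) (prVars Q φ)
        Q.length U U' s s' h hXfin hsub hwf hs'U heq x e heU
      refine ⟨e', he'U, ih _ _ (fun y => ?_) (fun y => ?_) hsat' heq'⟩
      · rcases eq_or_ne y x with hyx | hyx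
        · rw [hyx, Function.update_self]; exact heU
        · rw [Function.update_of_ne hyx]; exact hsU y
      · rcases eq_or_ne y x with hyx | hyx
        · rw [hyx, Function.update_self]; exact he'U
        · rw [Function.update_of_ne hyx]; exact hs'U y
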